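/- Let G be a σ-pro-p-group, let N be a σ-invariant open normal subgroup of G, and let ε ∈ {+1,−1}. Regard N, with the restriction of σ, as a σ-pro-p-group in its own right, with odd/even Haar measure μ_{N^ε}. Then the restriction of μ_{G^ε} to the subset N^ε = N ∩ G^ε equals |(G/N)^ε|⁻¹ · μ_{N^ε} (under the inclusion N^ε ⊆ G^ε). -/

import Mathlib

open MeasureTheory

set_option linter.unusedSectionVars false
set_option maxHeartbeats 1000000

open MeasureTheory Set Topology

section AuxTop

variable {K : Type*} [Group K] [TopologicalSpace K] [IsTopologicalGroup K]

lemma aux_exists_openNormal [CompactSpace K] [T2Space K] [TotallyDisconnectedSpace K]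
    {W : Set K} (hW : IsOpen W) (h1 : (1 : K) ∈ W) :
    ∃ U : Subgroup K, U.Normal ∧ IsOpen (U : Set K) ∧ (U : Set K) ⊆ W := by
  obtain ⟨V, hV, h1V, hVW⟩ := compact_exists_isClopen_in_isOpen hW h1
  obtain ⟨H, hH⟩ := IsTopologicalGroup.exist_openNormalSubgroup_sub_clopen_nhds_of_one hV h1V
  exact ⟨H.toSubgroup, H.isNormal', H.isOpen', hH.trans hVW⟩

lemma aux_sq_bij_quot (U : Subgroup K) (hUn : U.Normal) (hodd : Odd (Nat.card (K ⧸ U))) :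
    Function.Bijective (fun q : K ⧸ U => q * q) := by
  have := hUn
  have h2 := Nat.Coprime.pow_left_bijective (n := 2) hodd.coprime_two_right
  have : (fun q : K ⧸ U => q * q) = (fun q : K ⧸ U => q ^ 2) := by
    funext q; rw [pow_two]
  rw [this]
  exact h2

lemma aux_sq_inj [CompactSpace K] [T2Space K] [TotallyDisconnectedSpace K]
    (hodd : ∀ U : Subgroup K, U.Normal → IsOpen (U : Set K) → Odd (Nat.card (K ⧸ U)))
    {x y : K} (h : x * x = y * y) : x = y := by
  by_contra hne
  have h1 : (1 : K) ∈ ({x⁻¹ * y}ᶜ : Set K) := by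
    simp only [mem_compl_iff, mem_singleton_iff]
    intro habs
    have hxy : x⁻¹ * x = x⁻¹ * y := by rw [inv_mul_cancel]; exact habs
    exact hne (mul_left_cancel hxy)
  obtain ⟨U, hUn, hUo, hUW⟩ := aux_exists_openNormal isOpen_compl_singleton h1
  have := hUn
  have hq : ((x : K ⧸ U)) = (y : K ⧸ U) := by
    refine (aux_sq_bij_quot U hUn (hodd U hUn hUo)).1 ?_
    show (x : K ⧸ U) * (x : K ⧸ U) = (y : K ⧸ U) * (y : K ⧸ U)
    rw [← QuotientGroup.mk_mul, ← QuotientGroup.mk_mul, h]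
  have : x⁻¹ * y ∈ U := QuotientGroup.eq.mp hq
  exact hUW this rfl

lemma aux_sq_surj [CompactSpace K] [T2Space K] [TotallyDisconnectedSpace K]
    (hodd : ∀ U : Subgroup K, U.Normal → IsOpen (U : Set K) → Odd (Nat.card (K ⧸ U)))
    (t : K) : ∃ x : K, x * x = t := by
  have hcont : Continuous fun x : K => (x * x)⁻¹ * t :=
    (((continuous_id.mul continuous_id)).inv).mul continuous_const
  let I := {U : Subgroup K // U.Normal ∧ IsOpen (U : Set K)}
  haveI : Nonempty I := ⟨⟨⊤, inferInstance, by simp⟩⟩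
  let Z : I → Set K := fun U => (fun x => (x * x)⁻¹ * t) ⁻¹' (U.1 : Set K)
  have hZcl : ∀ U : I, IsClosed (Z U) :=
    fun U => (U.1.isClosed_of_isOpen U.2.2).preimage hcont
  have hZne : ∀ U : I, (Z U).Nonempty := by
    rintro ⟨U, hUn, hUo⟩
    haveI := hUn
    haveI : Finite (K ⧸ U) := U.quotient_finite_of_isOpen hUo
    obtain ⟨q, hq⟩ := (aux_sq_bij_quot U hUn (hodd U hUn hUo)).2 ((t : K ⧸ U))
    obtain ⟨x, rfl⟩ := QuotientGroup.mk_surjective q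
    refine ⟨x, ?_⟩
    show (x * x)⁻¹ * t ∈ U
    refine QuotientGroup.eq.mp ?_
    have hq' : (x : K ⧸ U) * (x : K ⧸ U) = (t : K ⧸ U) := hq
    rw [← QuotientGroup.mk_mul] at hq'
    exact hq'
  have hdir : Directed (· ⊇ ·) Z := by
    rintro ⟨U, hUn, hUo⟩ ⟨V, hVn, hVo⟩
    refine ⟨⟨U ⊓ V, ?_, ?_⟩, ?_, ?_⟩
    · exact ⟨fun n hn g => ⟨hUn.conj_mem n ((Subgroup.mem_inf).mp hn).1 g,
        hVn.conj_mem n ((Subgroup.mem_inf).mp hn).2 g⟩⟩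
    · rw [Subgroup.coe_inf]; exact hUo.inter hVo
    · intro x hx
      exact (Subgroup.mem_inf.mp hx).1
    · intro x hx
      exact (Subgroup.mem_inf.mp hx).2
  obtain ⟨x, hx⟩ := IsCompact.nonempty_iInter_of_directed_nonempty_isCompact_isClosed Z hdir hZne
    (fun U => (hZcl U).isCompact) hZcl
  refine ⟨x, ?_⟩
  by_contra hne
  have h1 : (1 : K) ∈ ({(x * x)⁻¹ * t}ᶜ : Set K) := by
    simp only [mem_compl_iff, mem_singleton_iff]
    intro habs
    have hxy : (x * x)⁻¹ * (x * x) = (x * x)⁻¹ * t := by rw [inv_mul_cancel]; exact habs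
    exact hne (mul_left_cancel hxy)
  obtain ⟨U, hUn, hUo, hUW⟩ := aux_exists_openNormal isOpen_compl_singleton h1
  have : x ∈ Z ⟨U, hUn, hUo⟩ := mem_iInter.mp hx _
  exact hUW this rfl

lemma aux_mem_of_sq_mem [CompactSpace K]
    (N : Subgroup K) (hNn : N.Normal) (hodd : Odd (Nat.card (K ⧸ N)))
    {x : K} (h : x * x ∈ N) : x ∈ N := by
  have := hNn
  have hq : ((x : K ⧸ N)) = ((1 : K ⧸ N)) := by
    refine (aux_sq_bij_quot N hNn hodd).1 ?_
    show (x : K ⧸ N) * (x : K ⧸ N) = (1 : K ⧸ N) * (1 : K ⧸ N)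
    rw [← QuotientGroup.mk_mul, one_mul, QuotientGroup.eq_one_iff _ |>.mpr h]
  exact (QuotientGroup.eq_one_iff x).mp hq

end AuxTop


lemma aux_card_mul {Q : Type*} [Group Q] [Finite Q] (hodd : Odd (Nat.card Q))
    (τ : Q →* Q) (hτ : ∀ x, τ (τ x) = x) :
    Nat.card Q = Nat.card {x : Q // τ x = x} * Nat.card {x : Q // τ x = x⁻¹} := by
  have h2 := Nat.Coprime.pow_left_bijective (n := 2) hodd.coprime_two_right
  have hsqinj : ∀ a b : Q, a * a = b * b → a = b := by
    intro a b hab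
    refine h2.1 ?_
    show a ^ 2 = b ^ 2
    rw [pow_two, pow_two, hab]
  have hsqsurj : ∀ t : Q, ∃ a : Q, a * a = t := by
    intro t
    obtain ⟨a, ha⟩ := h2.2 t
    exact ⟨a, by rw [← pow_two]; exact ha⟩
  have e : ({x : Q // τ x = x} × {x : Q // τ x = x⁻¹}) ≃ Q := by
    refine Equiv.ofBijective (fun z => (z.1 : Q) * (z.2 : Q)) ⟨?_, ?_⟩
    · rintro ⟨⟨a, ha⟩, ⟨b, hb⟩⟩ ⟨⟨a', ha'⟩, ⟨b', hb'⟩⟩ hz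
      simp only [Prod.mk.injEq, Subtype.mk.injEq] at hz ⊢
      have key : a'⁻¹ * a = b' * b⁻¹ := by
        have h := congrArg (fun z => a'⁻¹ * z * b⁻¹) hz
        simpa [mul_assoc] using h
      have h1 : τ (a'⁻¹ * a) = a'⁻¹ * a := by rw [map_mul, map_inv, ha, ha']
      have h2' : τ (b' * b⁻¹) = b'⁻¹ * b := by rw [map_mul, map_inv, hb, hb', inv_inv]
      have hbb : b' * b⁻¹ = b'⁻¹ * b := by rw [← h2', ← key, h1, key]
      have hbsq : b' * b' = b * b := by
        have := congrArg (fun z => b' * z * b) hbb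
        simpa [mul_assoc] using this
      have hb2 : b' = b := hsqinj _ _ hbsq
      subst hb2
      have : a = a' := by
        have := hz
        exact mul_right_cancel this
      exact ⟨this.symm ▸ rfl, rfl⟩
    · intro g
      obtain ⟨b, hb⟩ := hsqsurj ((τ g)⁻¹ * g)
      have hτb : τ b = b⁻¹ := by
        refine hsqinj _ _ ?_
        rw [← map_mul, hb, map_mul, map_inv, hτ, ← mul_inv_rev, hb, mul_inv_rev, inv_inv]
      have hτg : τ g = g * (b * b)⁻¹ := by rw [hb]; group
      have hτa : τ (g * b⁻¹) = g * b⁻¹ := by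
        rw [map_mul, map_inv, hτb, inv_inv, hτg]
        group
      exact ⟨⟨⟨g * b⁻¹, hτa⟩, ⟨b, hτb⟩⟩, by simp⟩
  rw [← Nat.card_congr e, Nat.card_prod]



lemma aux_index_eq_card_fixed {G : Type*} [Group G] [TopologicalSpace G] [IsTopologicalGroup G]
    [CompactSpace G] [T2Space G] [TotallyDisconnectedSpace G]
    (hodd : ∀ U : Subgroup G, U.Normal → IsOpen (U : Set G) → Odd (Nat.card (G ⧸ U)))
    (σ : G ≃* G) (hσ : ∀ a, σ (σ a) = a)
    (Gp : Subgroup G) (hGp : ∀ a, a ∈ Gp ↔ σ a = a)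
    (N : Subgroup G) (hNn : N.Normal) (hNopen : IsOpen (N : Set G))
    (σbar : G ⧸ N →* G ⧸ N) (hσbar : ∀ g : G, σbar (g : G ⧸ N) = ((σ g : G) : G ⧸ N)) :
    (N.comap Gp.subtype).index = Nat.card {x : G ⧸ N // σbar x = x} := by
  haveI := hNn
  rw [Subgroup.index_eq_card]
  refine Nat.card_congr (Equiv.ofBijective
    (fun q => Quotient.liftOn' q
      (fun a => (⟨((a : G) : G ⧸ N), by rw [hσbar, (hGp (a : G)).1 a.2]⟩ :
        {x : G ⧸ N // σbar x = x}))
      ?_) ⟨?_, ?_⟩)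
  · intro a b hab
    have hab' : (a : G)⁻¹ * (b : G) ∈ N := by
      have h1 := QuotientGroup.leftRel_apply.mp hab
      have h2 := Subgroup.mem_comap.mp h1
      simpa using h2
    exact Subtype.ext (QuotientGroup.eq.mpr hab')
  · intro q q'
    induction q using Quotient.inductionOn' with
    | h a =>
    induction q' using Quotient.inductionOn' with
    | h b =>
    intro h
    have hv : ((a : G) : G ⧸ N) = ((b : G) : G ⧸ N) := congrArg Subtype.val h
    refine Quotient.sound' ?_
    rw [QuotientGroup.leftRel_apply]
    refine Subgroup.mem_comap.mpr ?_
    simpa using QuotientGroup.eq.mp hv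
  · rintro ⟨x, hx⟩
    obtain ⟨g, rfl⟩ := QuotientGroup.mk_surjective x
    have hgq : ((g : G) : G ⧸ N) = ((σ g : G) : G ⧸ N) := by rw [← hσbar]; exact hx.symm
    have ht : g⁻¹ * σ g ∈ N := QuotientGroup.eq.mp hgq
    obtain ⟨h, hh⟩ := aux_sq_surj hodd (g⁻¹ * σ g)
    have hhN : h ∈ N := aux_mem_of_sq_mem N hNn (hodd N hNn hNopen) (by rw [hh]; exact ht)
    have hσh : σ h = h⁻¹ := by
      refine aux_sq_inj hodd ?_
      have e1 : σ h * σ h = (σ g)⁻¹ * g := by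
        rw [← map_mul, hh, map_mul, map_inv, hσ]
      have e2 : h⁻¹ * h⁻¹ = (σ g)⁻¹ * g := by
        rw [← mul_inv_rev, hh, mul_inv_rev, inv_inv]
      rw [e1, ← e2]
    have hσg : σ g = g * (h * h) := by rw [hh]; group
    have hc : σ (g * h) = g * h := by
      rw [map_mul, hσh, hσg]; group
    refine ⟨Quotient.mk'' (⟨g * h, (hGp _).2 hc⟩ : Gp), Subtype.ext ?_⟩
    show ((g * h : G) : G ⧸ N) = (g : G ⧸ N)
    refine QuotientGroup.eq.mpr ?_
    have hsimp : (g * h)⁻¹ * g = h⁻¹ := by group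
    rw [hsimp]
    exact N.inv_mem hhN


lemma aux_restrict_open_subgroup {K : Type*} [Group K] [TopologicalSpace K] [IsTopologicalGroup K]
    [CompactSpace K] [T2Space K] [MeasurableSpace K] [BorelSpace K]
    (μ : Measure K) [μ.IsHaarMeasure] [IsProbabilityMeasure μ]
    (H : Subgroup K) (hH : IsOpen (H : Set K))
    (ν : Measure H) [ν.IsHaarMeasure] [IsProbabilityMeasure ν] :
    μ.restrict (H : Set K) = (H.index : ENNReal)⁻¹ • Measure.map (Subtype.val) ν := by
  have hcl : IsClosed (H : Set K) := H.isClosed_of_isOpen hH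
  haveI : BorelSpace H := Subtype.borelSpace (H : Set K)
  have hemb : IsClosedEmbedding ((↑) : H → K) := hcl.isClosedEmbedding_subtypeVal
  have hme : MeasurableEmbedding ((↑) : H → K) := hemb.measurableEmbedding
  haveI : CompactSpace H := isCompact_iff_compactSpace.mp hcl.isCompact
  haveI : LocallyCompactSpace H :=
    IsCompact.locallyCompactSpace_of_mem_nhds_of_group (x := (1 : H)) isCompact_univ
      Filter.univ_mem
  set c : ENNReal := μ (H : Set K) with hcdef
  have hc0 : c ≠ 0 := hH.measure_ne_zero μ ⟨1, H.one_mem⟩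
  have hctop : c ≠ ⊤ := measure_ne_top μ _
  set m : Measure H := Measure.comap Subtype.val μ with hmdef
  have hmap : ∀ s : Set H, m s = μ (Subtype.val '' s) := fun s => hme.comap_apply μ s
  have hminv : m.IsMulLeftInvariant := by
    constructor
    intro g
    ext s hs
    rw [Measure.map_apply (measurable_const_mul g) hs, hmap, hmap]
    have himg : Subtype.val '' ((g * ·) ⁻¹' s) = (((g : K)) * ·) ⁻¹' (Subtype.val '' s) := by
      ext x
      constructor
      · rintro ⟨y, hy, rfl⟩
        exact ⟨g * y, hy, rfl⟩
      · rintro ⟨z, hz, hxz⟩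
        have hxz' : (z : K) = (g : K) * x := hxz
        refine ⟨g⁻¹ * z, by simpa using hz, ?_⟩
        push_cast
        rw [hxz']
        group
    rw [himg, measure_preimage_mul]
  have hmpos : m.IsOpenPosMeasure := by
    constructor
    intro U hU hne
    rw [hmap]
    exact ((hH.isOpenMap_subtype_val) U hU).measure_ne_zero μ (hne.image _)
  have hmuniv : m univ = c := by rw [hmap, image_univ, Subtype.range_coe]
  haveI hmfin : IsFiniteMeasure m := ⟨by rw [hmuniv]; exact hctop.lt_top⟩
  set m' : Measure H := c⁻¹ • m with hm'def
  haveI : IsProbabilityMeasure m' := ⟨by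
    rw [hm'def, Measure.smul_apply, smul_eq_mul, hmuniv, ENNReal.inv_mul_cancel hc0 hctop]⟩
  haveI hm'inv : m'.IsMulLeftInvariant := by
    constructor; intro g
    rw [hm'def, Measure.map_smul, hminv.map_mul_left_eq_self]
  haveI hm'pos : m'.IsOpenPosMeasure := by
    constructor; intro U hU hne
    rw [hm'def, Measure.smul_apply, smul_eq_mul]
    exact mul_ne_zero (ENNReal.inv_ne_zero.mpr hctop) (hmpos.open_pos U hU hne)
  haveI : m'.IsHaarMeasure := { }
  have hm'ν : m' = ν := Measure.isHaarMeasure_eq_of_isProbabilityMeasure m' ν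
  have hmν : m = c • ν := by
    rw [← hm'ν, hm'def, smul_smul, ENNReal.mul_inv_cancel hc0 hctop, one_smul]
  have hrest : μ.restrict (H : Set K) = Measure.map Subtype.val m := by
    rw [hmdef, hme.map_comap, Subtype.range_coe]
  rw [hrest, hmν, Measure.map_smul]
  congr 1
  -- c = index⁻¹
  haveI hfin : Finite (K ⧸ H) := H.quotient_finite_of_isOpen hH
  classical
  haveI := Fintype.ofFinite (K ⧸ H)
  set C : K ⧸ H → Set K := fun q => (fun x => (q.out)⁻¹ * x) ⁻¹' (H : Set K) with hC
  have hCq : ∀ (q : K ⧸ H) (x : K), x ∈ C q ↔ ((x : K ⧸ H) = q) := by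
    intro q x
    have : x ∈ C q ↔ (q.out)⁻¹ * x ∈ H := Iff.rfl
    rw [this, ← QuotientGroup.eq, QuotientGroup.out_eq']
    exact eq_comm
  have hmeasC : ∀ q, MeasurableSet (C q) :=
    fun q => hH.measurableSet.preimage (measurable_const_mul _)
  have hdisj : Pairwise (Function.onFun Disjoint C) := by
    intro q q' hqq'
    refine Set.disjoint_left.mpr ?_
    intro x hx hx'
    exact hqq' (((hCq q x).mp hx).symm.trans ((hCq q' x).mp hx'))
  have hcover : ⋃ q, C q = univ := by
    ext x; simp only [mem_iUnion, mem_univ, iff_true]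
    exact ⟨(x : K ⧸ H), (hCq _ x).mpr rfl⟩
  have hCval : ∀ q, μ (C q) = c := fun q => measure_preimage_mul μ _ _
  have h1 : (Fintype.card (K ⧸ H) : ENNReal) * c = 1 := by
    have hiu := measure_iUnion (μ := μ) hdisj hmeasC
    rw [hcover, measure_univ] at hiu
    have hsum : ∑' (q : K ⧸ H), μ (C q) = (Fintype.card (K ⧸ H) : ENNReal) * c := by
      rw [tsum_fintype]
      simp [hCval, Finset.sum_const, nsmul_eq_mul]
    rw [← hsum]
    exact hiu.symm
  have hcard : (Fintype.card (K ⧸ H) : ENNReal) = (H.index : ENNReal) := by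
    rw [Subgroup.index_eq_card, Nat.card_eq_fintype_card]
  rw [hcard] at h1
  have ha0 : (H.index : ENNReal) ≠ 0 := by
    intro h0
    rw [h0, zero_mul] at h1
    exact zero_ne_one h1
  have hatop : (H.index : ENNReal) ≠ ⊤ := ENNReal.natCast_ne_top _
  calc c = ((H.index : ENNReal)⁻¹ * (H.index : ENNReal)) * c := by
        rw [ENNReal.inv_mul_cancel ha0 hatop, one_mul]
    _ = (H.index : ENNReal)⁻¹ * ((H.index : ENNReal) * c) := by rw [mul_assoc]
    _ = (H.index : ENNReal)⁻¹ := by rw [h1, mul_one]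


/-- Let `G` be a `σ`-pro-`p`-group, `N` a `σ`-invariant open
normal subgroup and `ε ∈ {+1, −1}`. Regard `N`, with the restriction of `σ`,
as a `σ`-pro-`p`-group in its own right. All the odd/even Haar measures are
realized as measures on `G`: `μGε` (the measure `μ_{G^ε}`) is, for `ε = 1`,
the pushforward to `G` of the Haar probability measure `μp` on `G⁺`, and for
`ε = −1` the pushforward of the Haar probability measure `μG` under the second
component of the inverse of the multiplication homeomorphism
`e : G⁺ × G⁻ ≃ₜ G`; similarly `μNε` (the measure `μ_{N^ε}`) is built from the
Haar probability measures `μNp` on `N⁺` and `μN` on `N` via the multiplication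
homeomorphism `eN : N⁺ × N⁻ ≃ₜ N`. Then the restriction of `μ_{G^ε}` to the
subset `N^ε = N ∩ G^ε` equals `|(G/N)^ε|⁻¹ · μ_{N^ε}`. Here `σbar` is the
automorphism of `G/N` induced by `σ`. -/
theorem sigma_pro_p_group_restrict_haar_to_open_subgroup
    {p : ℕ} (hp : p.Prime) (hodd : Odd p)
    {G : Type*} [Group G] [TopologicalSpace G] [IsTopologicalGroup G]
    [CompactSpace G] [T2Space G] [TotallyDisconnectedSpace G]
    [MeasurableSpace G] [BorelSpace G]
    (hGpro : ∀ U : Subgroup G, U.Normal → IsOpen (U : Set G) → ∃ n : ℕ, U.index = p ^ n)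
    (σ : G ≃* G) (hσcont : Continuous σ) (hσ : ∀ a, σ (σ a) = a)
    (μG : Measure G) [μG.IsHaarMeasure] [IsProbabilityMeasure μG] [μG.Regular]
    (Gp : Subgroup G) (hGp : ∀ a : G, a ∈ Gp ↔ σ a = a)
    (μp : Measure Gp) [μp.IsHaarMeasure] [IsProbabilityMeasure μp] [μp.Regular]
    (e : (Gp × {a : G // σ a = a⁻¹}) ≃ₜ G)
    (he : ∀ x : Gp × {a : G // σ a = a⁻¹}, e x = (x.1 : G) * (x.2 : G))
    (N : Subgroup G) [N.Normal] (hNopen : IsOpen (N : Set G))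
    (hNσ : ∀ a, σ a ∈ N ↔ a ∈ N)
    (σbar : G ⧸ N →* G ⧸ N) (hσbar : ∀ g : G, σbar (g : G ⧸ N) = ((σ g : G) : G ⧸ N))
    (μN : Measure N) [μN.IsHaarMeasure] [IsProbabilityMeasure μN] [μN.Regular]
    (Np : Subgroup N) (hNp : ∀ a : N, a ∈ Np ↔ σ (a : G) = (a : G))
    (μNp : Measure Np) [μNp.IsHaarMeasure] [IsProbabilityMeasure μNp] [μNp.Regular]
    (eN : (Np × {a : N // σ (a : G) = (a : G)⁻¹}) ≃ₜ N)
    (heN : ∀ x : Np × {a : N // σ (a : G) = (a : G)⁻¹}, eN x = (x.1 : N) * (x.2 : N))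
    (ε : ℤ) (hε : ε = 1 ∨ ε = -1)
    (μGε : Measure G)
    (hμGε : (ε = 1 ∧ μGε = Measure.map (fun a : Gp => (a : G)) μp) ∨
            (ε = -1 ∧ μGε = Measure.map (fun g : G => ((e.symm g).2 : G)) μG))
    (μNε : Measure G)
    (hμNε : (ε = 1 ∧ μNε = Measure.map (fun a : Np => ((a : N) : G)) μNp) ∨
            (ε = -1 ∧ μNε = Measure.map (fun a : N => (((eN.symm a).2 : N) : G)) μN)) :
    μGε.restrict ((N : Set G) ∩ {a : G | σ a = a ^ ε}) =
      (Nat.card {x : G ⧸ N // σbar x = x ^ ε} : ENNReal)⁻¹ • μNε := by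
  have hNn : N.Normal := inferInstance
  have hoddq : ∀ U : Subgroup G, U.Normal → IsOpen (U : Set G) → Odd (Nat.card (G ⧸ U)) := by
    intro U hUn hUo
    obtain ⟨n, hn⟩ := hGpro U hUn hUo
    rw [← Subgroup.index_eq_card, hn]
    exact hodd.pow
  have hGpset : (Gp : Set G) = {a : G | σ a = a} := Set.ext fun a => hGp a
  have hGpclosed : IsClosed (Gp : Set G) := by
    rw [hGpset]; exact isClosed_eq hσcont continuous_id
  haveI : CompactSpace Gp := isCompact_iff_compactSpace.mp hGpclosed.isCompact
  haveI : BorelSpace Gp := Subtype.borelSpace (Gp : Set G)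
  haveI : BorelSpace N := Subtype.borelSpace (N : Set G)
  haveI : BorelSpace Np := Subtype.borelSpace (Np : Set N)
  set H' : Subgroup Gp := N.comap Gp.subtype with hH'def
  haveI : BorelSpace H' := Subtype.borelSpace (H' : Set Gp)
  have hH'open : IsOpen (H' : Set Gp) := by
    have hpre : (H' : Set Gp) = (Subtype.val : Gp → G) ⁻¹' (N : Set G) := rfl
    rw [hpre]
    exact hNopen.preimage continuous_subtype_val
  have hcardp : H'.index = Nat.card {x : G ⧸ N // σbar x = x} :=
    aux_index_eq_card_fixed hoddq σ hσ Gp hGp N hNn hNopen σbar hσbar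
  -- the multiplicative equivalence between Np and H'
  let θ : Np ≃* H' :=
    { toFun := fun a =>
        ⟨⟨((a : N) : G), (hGp _).2 ((hNp (a : N)).1 a.2)⟩,
          Subgroup.mem_comap.mpr (a : N).2⟩
      invFun := fun b =>
        ⟨⟨((b : Gp) : G), Subgroup.mem_comap.mp b.2⟩, (hNp _).2 ((hGp _).1 (b : Gp).2)⟩
      left_inv := fun a => rfl
      right_inv := fun b => rfl
      map_mul' := fun a b => rfl }
  have hθcont : Continuous θ := by
    refine Continuous.subtype_mk ?_ _
    refine Continuous.subtype_mk ?_ _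
    exact continuous_subtype_val.comp continuous_subtype_val
  have hθsymmcont : Continuous θ.symm := by
    refine Continuous.subtype_mk ?_ _
    refine Continuous.subtype_mk ?_ _
    exact continuous_subtype_val.comp continuous_subtype_val
  set ν : Measure H' := Measure.map θ μNp with hνdef
  haveI : ν.IsHaarMeasure := MulEquiv.isHaarMeasure_map μNp θ hθcont hθsymmcont
  haveI : IsProbabilityMeasure ν := Measure.isProbabilityMeasure_map hθcont.measurable.aemeasurable
  rcases hε with hε1 | hεm1
  · -- even part
    subst hε1
    rcases hμGε with ⟨-, hG1⟩ | ⟨habs, -⟩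
    swap
    · exact absurd habs (by decide)
    rcases hμNε with ⟨-, hN1⟩ | ⟨habs, -⟩
    swap
    · exact absurd habs (by decide)
    subst hG1; subst hN1
    simp only [zpow_one]
    have hme : MeasurableEmbedding (fun a : Gp => (a : G)) :=
      hGpclosed.isClosedEmbedding_subtypeVal.measurableEmbedding
    have hpre : (fun a : Gp => (a : G)) ⁻¹' ((N : Set G) ∩ {a : G | σ a = a}) = (H' : Set Gp) := by
      ext a
      simp only [Set.mem_preimage, Set.mem_inter_iff, Set.mem_setOf_eq, SetLike.mem_coe]
      constructor
      · rintro ⟨h1, -⟩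
        exact Subgroup.mem_comap.mpr h1
      · intro h
        exact ⟨Subgroup.mem_comap.mp h, (hGp _).1 a.2⟩
    rw [hme.restrict_map, hpre, aux_restrict_open_subgroup μp H' hH'open ν,
      Measure.map_smul, hνdef,
      Measure.map_map measurable_subtype_coe hθcont.measurable,
      Measure.map_map measurable_subtype_coe
        (measurable_subtype_coe.comp hθcont.measurable)]
    have hfun : ((fun a : Gp => (a : G)) ∘ ((Subtype.val : H' → Gp) ∘ θ)) =
        (fun a : Np => ((a : N) : G)) := rfl
    rw [hfun, hcardp]
  · -- odd part
    subst hεm1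
    rcases hμGε with ⟨habs, -⟩ | ⟨-, hG2⟩
    · exact absurd habs (by decide)
    rcases hμNε with ⟨habs, -⟩ | ⟨-, hN2⟩
    · exact absurd habs (by decide)
    subst hG2; subst hN2
    simp only [zpow_neg_one]
    have hSmeas : MeasurableSet ((N : Set G) ∩ {a : G | σ a = a⁻¹}) :=
      hNopen.measurableSet.inter (isClosed_eq hσcont continuous_inv).measurableSet
    have hπcont : Continuous (fun g : G => ((e.symm g).2 : G)) :=
      continuous_subtype_val.comp (continuous_snd.comp e.symm.continuous)
    have hαcont : Continuous (fun g : G => (((e.symm g).1 : Gp) : G)) :=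
      continuous_subtype_val.comp (continuous_fst.comp e.symm.continuous)
    have hfcont : Continuous (fun a : N => (((eN.symm a).2 : N) : G)) :=
      continuous_subtype_val.comp
        (continuous_subtype_val.comp (continuous_snd.comp eN.symm.continuous))
    have hdec : ∀ g : G, (((e.symm g).1 : Gp) : G) * ((e.symm g).2 : G) = g := by
      intro g
      have h1 := e.apply_symm_apply g
      rw [he (e.symm g)] at h1
      exact h1
    have hsymm_eq : ∀ (a : Gp) (b : {x : G // σ x = x⁻¹}),
        e.symm ((a : G) * (b : G)) = (a, b) := by
      intro a b
      have h := he (a, b)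
      rw [show (((a, b).1 : Gp) : G) = (a : G) from rfl,
        show (((a, b).2 : {x : G // σ x = x⁻¹}) : G) = (b : G) from rfl] at h
      rw [← h, Homeomorph.symm_apply_apply]
    have htrans : ∀ (a₀ : Gp) (g : G),
        e.symm ((a₀ : G) * g) = (a₀ * (e.symm g).1, (e.symm g).2) := by
      intro a₀ g
      have hmul : (a₀ : G) * g =
          ((a₀ * (e.symm g).1 : Gp) : G) * ((e.symm g).2 : G) := by
        push_cast
        rw [mul_assoc, hdec g]
      rw [hmul, hsymm_eq]
    refine Measure.ext fun A hA => ?_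
    rw [Measure.restrict_apply hA,
      Measure.map_apply hπcont.measurable (hA.inter hSmeas),
      Measure.smul_apply, Measure.map_apply hfcont.measurable hA, smul_eq_mul]
    set D : Set G := ((fun g : G => ((e.symm g).2 : G)) ⁻¹'
        (A ∩ ((N : Set G) ∩ {a : G | σ a = a⁻¹}))) ∩
      ((fun g : G => (((e.symm g).1 : Gp) : G)) ⁻¹' (N : Set G)) with hDdef
    have hDmeas : MeasurableSet D :=
      (hπcont.measurable (hA.inter hSmeas)).inter
        (hαcont.measurable hNopen.measurableSet)
    have hmem : ∀ (q : Gp ⧸ H') (g : G),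
        (((q.out : Gp) : G))⁻¹ * g ∈ D ↔
          (((e.symm g).2 : G) ∈ A ∩ ((N : Set G) ∩ {a : G | σ a = a⁻¹}) ∧
            ((QuotientGroup.mk (e.symm g).1 : Gp ⧸ H') = q)) := by
      intro q g
      have hcoe : (((q.out : Gp) : G))⁻¹ * g = (((q.out)⁻¹ : Gp) : G) * g := by push_cast; rfl
      have h2 : e.symm ((((q.out)⁻¹ : Gp) : G) * g) =
          ((q.out)⁻¹ * (e.symm g).1, (e.symm g).2) := htrans _ g
      have hiff : ((q.out)⁻¹ * (e.symm g).1 ∈ H') ↔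
          ((QuotientGroup.mk (e.symm g).1 : Gp ⧸ H') = q) := by
        constructor
        · intro h
          have h' := QuotientGroup.eq.mpr h
          rw [QuotientGroup.out_eq'] at h'
          exact h'.symm
        · intro h
          refine QuotientGroup.eq.mp ?_
          rw [QuotientGroup.out_eq', h]
      simp only [hDdef, Set.mem_inter_iff, Set.mem_preimage, hcoe, h2, SetLike.mem_coe]
      refine and_congr Iff.rfl ?_
      rw [← hiff]
      exact ⟨fun h => Subgroup.mem_comap.mp h, fun h => Subgroup.mem_comap.mpr h⟩
    have hUnion : (fun g : G => ((e.symm g).2 : G)) ⁻¹'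
        (A ∩ ((N : Set G) ∩ {a : G | σ a = a⁻¹})) =
        ⋃ q : Gp ⧸ H', (fun x : G => (((q.out : Gp) : G))⁻¹ * x) ⁻¹' D := by
      ext g
      simp only [Set.mem_iUnion, Set.mem_preimage]
      constructor
      · intro hg
        exact ⟨QuotientGroup.mk (e.symm g).1, (hmem _ g).mpr ⟨hg, rfl⟩⟩
      · rintro ⟨q, hq⟩
        exact ((hmem q g).mp hq).1
    have hdisjU : Pairwise (Function.onFun Disjoint
        (fun q : Gp ⧸ H' => (fun x : G => (((q.out : Gp) : G))⁻¹ * x) ⁻¹' D)) := by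
      intro q q' hne
      refine Set.disjoint_left.mpr fun g hg hg' => hne ?_
      rw [← ((hmem q g).mp hg).2, ← ((hmem q' g).mp hg').2]
    haveI : Finite (Gp ⧸ H') := H'.quotient_finite_of_isOpen hH'open
    classical
    haveI := Fintype.ofFinite (Gp ⧸ H')
    have hsum : μG ((fun g : G => ((e.symm g).2 : G)) ⁻¹'
        (A ∩ ((N : Set G) ∩ {a : G | σ a = a⁻¹}))) =
        (Fintype.card (Gp ⧸ H') : ENNReal) * μG D := by
      rw [hUnion, measure_iUnion hdisjU
        (fun q => hDmeas.preimage (measurable_const_mul _)), tsum_fintype]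
      simp [measure_preimage_mul, Finset.sum_const, nsmul_eq_mul]
    have hDsubN : D ⊆ (N : Set G) := by
      rintro g ⟨hg2, hg1⟩
      rw [Set.mem_preimage] at hg1 hg2
      have hgdec := hdec g
      rw [← hgdec]
      exact Set.mem_of_eq_of_mem rfl
        (N.mul_mem (SetLike.mem_coe.mp hg1) (SetLike.mem_coe.mp hg2.2.1))
    have hrestrN := aux_restrict_open_subgroup μG N hNopen μN
    have hDval : μG D = (N.index : ENNReal)⁻¹ * μN (Subtype.val ⁻¹' D) := by
      have h1 : μG D = μG.restrict (N : Set G) D := by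
        rw [Measure.restrict_apply hDmeas, Set.inter_eq_self_of_subset_left hDsubN]
      rw [h1, hrestrN, Measure.smul_apply,
        Measure.map_apply measurable_subtype_coe hDmeas, smul_eq_mul]
    have hvalD : ((Subtype.val : N → G) ⁻¹' D : Set N) =
        (fun a : N => (((eN.symm a).2 : N) : G)) ⁻¹' A := by
      ext n
      have hn : ((eN.symm n).1 : N) * ((eN.symm n).2 : N) = n := by
        have h1 := eN.apply_symm_apply n
        rw [heN (eN.symm n)] at h1
        exact h1
      have haGp : ((((eN.symm n).1 : N)) : G) ∈ Gp :=
        (hGp _).2 ((hNp _).1 (eN.symm n).1.2)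
      have hbodd : σ ((((eN.symm n).2 : N)) : G) = (((((eN.symm n).2 : N)) : G))⁻¹ :=
        (eN.symm n).2.2
      have hsplit : e.symm (n : G) =
          (⟨(((eN.symm n).1 : N) : G), haGp⟩, ⟨(((eN.symm n).2 : N) : G), hbodd⟩) := by
        have hcoe : (n : G) = (((eN.symm n).1 : N) : G) * (((eN.symm n).2 : N) : G) := by
          conv_lhs => rw [← hn]
          push_cast
          rfl
        rw [hcoe]
        exact hsymm_eq ⟨(((eN.symm n).1 : N) : G), haGp⟩ ⟨(((eN.symm n).2 : N) : G), hbodd⟩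
      simp only [Set.mem_preimage, hDdef, Set.mem_inter_iff, Set.mem_setOf_eq,
        SetLike.mem_coe, hsplit]
      constructor
      · rintro ⟨⟨hA', -⟩, -⟩
        exact hA'
      · intro hA'
        exact ⟨⟨hA', ((eN.symm n).2 : N).2, hbodd⟩, ((eN.symm n).1 : N).2⟩
    have hτ : ∀ x : G ⧸ N, σbar (σbar x) = x := by
      intro x
      obtain ⟨g, rfl⟩ := QuotientGroup.mk_surjective x
      rw [hσbar, hσbar, hσ]
    haveI : Finite (G ⧸ N) := N.quotient_finite_of_isOpen hNopen
    have hcardN : N.index =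
        Nat.card {x : G ⧸ N // σbar x = x} * Nat.card {x : G ⧸ N // σbar x = x⁻¹} := by
      rw [Subgroup.index_eq_card]
      exact aux_card_mul (hoddq N hNn hNopen) σbar hτ
    haveI : Nonempty {x : G ⧸ N // σbar x = x} := ⟨⟨1, map_one σbar⟩⟩
    have hp0 : (Nat.card {x : G ⧸ N // σbar x = x} : ENNReal) ≠ 0 := by
      have hpos : 0 < Nat.card {x : G ⧸ N // σbar x = x} := Nat.card_pos
      exact_mod_cast hpos.ne'
    have hfintoidx : (Fintype.card (Gp ⧸ H') : ENNReal) =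
        (Nat.card {x : G ⧸ N // σbar x = x} : ENNReal) := by
      rw [← Nat.card_eq_fintype_card, ← Subgroup.index_eq_card, hcardp]
    have hscal : (Fintype.card (Gp ⧸ H') : ENNReal) * (N.index : ENNReal)⁻¹ =
        (Nat.card {x : G ⧸ N // σbar x = x⁻¹} : ENNReal)⁻¹ := by
      rw [hfintoidx, hcardN]
      push_cast
      rw [ENNReal.mul_inv (Or.inl hp0) (Or.inl (ENNReal.natCast_ne_top _)),
        ← mul_assoc, ENNReal.mul_inv_cancel hp0 (ENNReal.natCast_ne_top _), one_mul]
    rw [hsum, hDval, hvalD, ← mul_assoc, hscal]
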